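/- If Σ axiomatizes a congruence modular variety (in the sense of Dent–Kearnes–Szendrei, Σ idempotent with Σ ∪ Σ' inconsistent), then the free-algebra functor F_Σ does not preserve preimages; more precisely, if Σ ∪ Σ' is inconsistent and Σ is consistent (V(Σ) contains an algebra with more than one element), then Σ ⊬ Σ', hence F_Σ does not preserve preimages. -/
import Mathlib


universe u

/-- A finitary algebraic signature. -/
structure Sig where
  ops : Type
  ar : ops → ℕ

namespace UA

/-- Terms over the signature `S` with variables from `X`. -/
inductive Term (S : Sig) (X : Type) : Type where
  | var : X → Term S X
  | app : (o : S.ops) → (Fin (S.ar o) → Term S X) → Term S X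

/-- Simultaneous substitution of terms for variables. -/
def Term.subst {S : Sig} {X Y : Type} (σ : X → Term S Y) : Term S X → Term S Y
  | .var x => σ x
  | .app o ts => .app o fun i => (ts i).subst σ

/-- Renaming (substitution of variables for variables). -/
def Term.rename {S : Sig} {X Y : Type} (φ : X → Y) (t : Term S X) : Term S Y :=
  t.subst fun x => .var (φ x)

/-- Equational provability from the set `Γ` of axioms (pairs of terms over the
countable variable set `ℕ`), over arbitrary variable sets. -/
inductive Eqv {S : Sig} (Γ : Set (Term S ℕ × Term S ℕ)) :
    {X : Type} → Term S X → Term S X → Prop where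
  | axm {X : Type} {l r : Term S ℕ} (h : (l, r) ∈ Γ) (σ : ℕ → Term S X) :
      Eqv Γ (l.subst σ) (r.subst σ)
  | refl {X : Type} (t : Term S X) : Eqv Γ t t
  | symm {X : Type} {t u : Term S X} : Eqv Γ t u → Eqv Γ u t
  | trans {X : Type} {t u v : Term S X} : Eqv Γ t u → Eqv Γ u v → Eqv Γ t v
  | congr {X : Type} (o : S.ops) {ts us : Fin (S.ar o) → Term S X} :
      (∀ i, Eqv Γ (ts i) (us i)) → Eqv Γ (.app o ts) (.app o us)
  | sbst {X Y : Type} {t u : Term S X} (σ : X → Term S Y) :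
      Eqv Γ t u → Eqv Γ (t.subst σ) (u.subst σ)

def termSetoid {S : Sig} (Γ : Set (Term S ℕ × Term S ℕ)) (X : Type) : Setoid (Term S X) :=
  ⟨Eqv Γ, ⟨fun t => .refl t, fun h => h.symm, fun h h' => h.trans h'⟩⟩

/-- The free algebra over the variable set `X` in the variety axiomatized by `Γ`:
terms modulo `Γ`-provable equality.  This is the object part of the free-algebra
functor `F_Σ`. -/
def FreeAlg {S : Sig} (Γ : Set (Term S ℕ × Term S ℕ)) (X : Type) : Type :=
  Quotient (termSetoid Γ X)

/-- The action of the free-algebra functor `F_Σ` on maps: variable substitution. -/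
def FreeAlg.map {S : Sig} {Γ : Set (Term S ℕ × Term S ℕ)} {X Y : Type} (φ : X → Y) :
    FreeAlg Γ X → FreeAlg Γ Y :=
  Quotient.map (Term.rename φ) fun _ _ h => h.sbst _

end UA

namespace UA

variable {S : Sig}

/-- Weak independence of the first variable position (see Dent–Kearnes–Szendrei). -/
def WeakIndep (Γ : Set (Term S ℕ × Term S ℕ)) {n : ℕ} (p : Term S (Fin (n + 1))) : Prop :=
  ∃ (x y : ℕ) (v : Fin n → ℕ) (q : Term S Unit),
    x ≠ y ∧ Eqv Γ (p.rename (Fin.cases x v)) (q.rename fun _ => y)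

/-- The derivative `Σ'` of `Σ`: all independence equations
`p(x, z₁, …, zₙ) ≈ p(y, z₁, …, zₙ)` (variables distinct) for terms `p`
weakly independent of the occurrence `x`. -/
def Deriv (Γ : Set (Term S ℕ × Term S ℕ)) : Set (Term S ℕ × Term S ℕ) :=
  { e | ∃ (n : ℕ) (p : Term S (Fin (n + 1))), WeakIndep Γ p ∧
        e = (p.rename (Fin.cases 0 fun i => (i : ℕ) + 2),
             p.rename (Fin.cases 1 fun i => (i : ℕ) + 2)) }

/-- The free-algebra functor preserves preimages. -/
def PreservesPreimages (Γ : Set (Term S ℕ × Term S ℕ)) : Prop :=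
  ∀ (X Y : Type) (φ : X → Y) (V : Set Y) (t : FreeAlg Γ X),
    FreeAlg.map φ t ∈ Set.range (FreeAlg.map (Γ := Γ) (Subtype.val : V → Y)) →
      t ∈ Set.range (FreeAlg.map (Γ := Γ) (Subtype.val : (φ ⁻¹' V) → X))

/-- If `Σ ∪ Σ'` is inconsistent while `Σ` is consistent (as for congruence modular
varieties à la Dent–Kearnes–Szendrei), then `Σ ⊬ Σ'`, and hence the free-algebra
functor `F_Σ` does not preserve preimages. -/
theorem subst_subst {X Y Z : Type} (σ : X → Term S Y) (τ : Y → Term S Z) (t : Term S X) :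
    (t.subst σ).subst τ = t.subst (fun x => (σ x).subst τ) := by
  induction t with
  | var x => rfl
  | app o ts ih =>
      simp only [Term.subst]
      exact congrArg _ (funext fun i => ih i)

theorem rename_rename {X Y Z : Type} (ψ : X → Y) (φ : Y → Z) (t : Term S X) :
    (t.rename ψ).rename φ = t.rename (fun a => φ (ψ a)) := by
  unfold Term.rename; rw [subst_subst]; rfl

theorem rename_subst {X Y Z : Type} (ψ : X → Y) (τ : Y → Term S Z) (t : Term S X) :
    (t.rename ψ).subst τ = t.subst (fun a => τ (ψ a)) := by
  unfold Term.rename; rw [subst_subst]; rfl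

theorem eqv_union {Γ : Set (Term S ℕ × Term S ℕ)} (H : ∀ e ∈ Deriv Γ, Eqv Γ e.1 e.2)
    {X : Type} {t u : Term S X} (h : Eqv (Γ ∪ Deriv Γ) t u) : Eqv Γ t u := by
  induction h with
  | axm h σ =>
      rcases h with h | h
      · exact .axm h σ
      · exact (H _ h).sbst σ
  | refl t => exact .refl t
  | symm _ ih => exact ih.symm
  | trans _ _ ih1 ih2 => exact ih1.trans ih2
  | congr o _ ih => exact .congr o ih
  | sbst σ _ ih => exact ih.sbst σ

theorem deriv_of_preserves {Γ : Set (Term S ℕ × Term S ℕ)} (hp : PreservesPreimages Γ) :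
    ∀ e ∈ Deriv Γ, Eqv Γ e.1 e.2 := by
  rintro e ⟨n, p, ⟨x, y, v, q, hxy, hq⟩, rfl⟩
  simp only
  set z : Fin n → ℕ := fun i => (i : ℕ) + 2 with hz
  set t : Term S ℕ := p.rename (Fin.cases 0 z) with ht
  let φ : ℕ → ℕ := fun m =>
    match m with
    | 0 => x
    | 1 => x
    | (m + 2) => if h : m < n then v ⟨m, h⟩ else x
  have hφ0 : φ 0 = x := rfl
  have hφ1 : φ 1 = x := rfl
  have hφz : ∀ i : Fin n, φ (z i) = v i := by
    intro i
    show (if h : (i : ℕ) < n then v ⟨(i : ℕ), h⟩ else x) = v i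
    rw [dif_pos i.isLt]
  -- t renamed along φ is p(x, v̄)
  have htφ : t.rename φ = p.rename (Fin.cases x v) := by
    rw [ht, rename_rename]
    refine congrArg (fun g => Term.rename g p) (funext fun j => ?_)
    induction j using Fin.cases with
    | zero => exact hφ0
    | succ i => exact hφz i
  -- from weak independence, t.rename φ ≈ q(y)
  have hty : Eqv Γ (t.rename φ) (q.rename fun _ => y) := htφ ▸ hq
  -- apply preservation of preimages with V = {y}
  have hmem : FreeAlg.map φ (Quotient.mk _ t) ∈
      Set.range (FreeAlg.map (Γ := Γ) (Subtype.val : ({y} : Set ℕ) → ℕ)) := by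
    refine ⟨Quotient.mk _ (q.rename fun _ => (⟨y, rfl⟩ : ({y} : Set ℕ))), ?_⟩
    refine Quotient.sound ?_
    show Eqv Γ (((q.rename _)).rename _) (t.rename φ)
    have : ((q.rename fun _ => (⟨y, rfl⟩ : ({y} : Set ℕ))).rename Subtype.val)
        = q.rename fun _ => y := by
      rw [rename_rename]
    rw [this]
    exact hty.symm
  obtain ⟨s', hs'⟩ := hp ℕ ℕ φ {y} (Quotient.mk _ t) hmem
  obtain ⟨s, rfl⟩ := Quotient.exists_rep s'
  have hE : Eqv Γ (s.rename (Subtype.val : (φ ⁻¹' {y}) → ℕ)) t := Quotient.exact hs'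
  -- the swap substitution
  let σs : ℕ → Term S ℕ := fun m => .var (if m = 0 then 1 else if m = 1 then 0 else m)
  have hswap := hE.sbst σs
  -- LHS is fixed by the swap since variables of s avoid 0 and 1
  have hL : (s.rename (Subtype.val : (φ ⁻¹' {y}) → ℕ)).subst σs
      = s.rename (Subtype.val : (φ ⁻¹' {y}) → ℕ) := by
    rw [rename_subst]
    unfold Term.rename
    refine congrArg (fun g => Term.subst g s) (funext fun u => ?_)
    have hu : φ u.val = y := u.2
    have h0 : u.val ≠ 0 := by rintro h; rw [h, hφ0] at hu; exact hxy hu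
    have h1 : u.val ≠ 1 := by rintro h; rw [h, hφ1] at hu; exact hxy hu
    show σs u.val = _
    simp [σs, h0, h1]
  -- RHS becomes p(1, z̄)
  have hR : t.subst σs = p.rename (Fin.cases 1 z) := by
    rw [ht, rename_subst]
    unfold Term.rename
    refine congrArg (fun g => Term.subst g p) (funext fun j => ?_)
    induction j using Fin.cases with
    | zero => rfl
    | succ i =>
        show σs (z i) = Term.var (z i)
        have h0 : z i ≠ 0 := by simp [hz]
        have h1 : z i ≠ 1 := by simp [hz]
        simp [σs, h0, h1]
  rw [hL, hR] at hswap
  exact hE.symm.trans hswap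

theorem modular_implies_not_preservesPreimages (Γ : Set (Term S ℕ × Term S ℕ))
    (hincons : Eqv (Γ ∪ Deriv Γ) (Term.var 0 : Term S ℕ) (Term.var 1))
    (hcons : ¬ Eqv Γ (Term.var 0 : Term S ℕ) (Term.var 1)) :
    (¬ ∀ e ∈ Deriv Γ, Eqv Γ e.1 e.2) ∧ ¬ PreservesPreimages Γ := by
  constructor
  · intro H
    exact hcons (eqv_union H hincons)
  · intro hp
    exact hcons (eqv_union (deriv_of_preserves hp) hincons)

end UA
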